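/- arXiv:2102.00323 — 2 statements merged into one kernel-verified Lean document; each statement's English description precedes it below -/
import Mathlib

section
/- Let r ≥ 4 be an integer. For every ε > 0 there exists n_0 such that for all n ≥ n_0, every K_{r+1}-free graph G on n vertices satisfies ν(K_4, G) ≤ ((r^3 − 6r^2 + 11r − 6)/r^3)·C(n,4) + ε·n^4. -/
open SimpleGraph

/-- The number of (not necessarily induced) subgraphs of `G` isomorphic to `T`. -/
noncomputable def subgraphCount {α β : Type*} (T : SimpleGraph α) (G : SimpleGraph β) : ℕ :=
  Nat.card {H : G.Subgraph // Nonempty (T ≃g H.coe)}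

/-- `G` is `F`-free: it contains no subgraph isomorphic to `F`. -/
def IsFFree {α β : Type*} (F : SimpleGraph α) (G : SimpleGraph β) : Prop :=
  ∀ H : G.Subgraph, IsEmpty (F ≃g H.coe)

/-- The generalized Turán number `ex(n, T, F)`. -/
noncomputable def genTuran (n : ℕ) {α γ : Type*} (T : SimpleGraph α) (F : SimpleGraph γ) : ℕ :=
  sSup {k | ∃ G : SimpleGraph (Fin n), IsFFree F G ∧ subgraphCount T G = k}

/-- The path with three edges on four vertices. -/
noncomputable def P3 : SimpleGraph (Fin 4) := pathGraph 4

set_option linter.unusedSectionVars false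
set_option maxHeartbeats 1000000


set_option linter.unusedSectionVars false

open Finset

variable {V : Type} [DecidableEq V]

/-- elementary symmetric sum of degree m over a finset -/
noncomputable def esym (m : ℕ) (S : Finset V) (x : V → ℝ) : ℝ :=
  ∑ T ∈ S.powersetCard m, ∏ j ∈ T, x j

lemma esym_nonneg {m : ℕ} {S : Finset V} {x : V → ℝ} (hx : ∀ j ∈ S, 0 ≤ x j) :
    0 ≤ esym m S x := by
  refine Finset.sum_nonneg fun T hT => Finset.prod_nonneg fun j hj => ?_
  exact hx j ((Finset.mem_powersetCard.1 hT).1 hj)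

lemma esym_zero (S : Finset V) (x : V → ℝ) : esym 0 S x = 1 := by
  simp [esym, Finset.powersetCard_zero]

/-- inner bijection: sum over m+1 subsets containing i -/
lemma sum_filter_mem_powersetCard (m : ℕ) (S : Finset V) (x : V → ℝ) {i : V} (hi : i ∈ S) :
    ∑ T ∈ (S.powersetCard (m+1)).filter (fun T => i ∈ T), ∏ j ∈ T, x j
      = x i * esym m (S.erase i) x := by
  rw [esym, Finset.mul_sum]
  refine Finset.sum_nbij' (fun T => T.erase i) (fun T => insert i T) ?_ ?_ ?_ ?_ ?_
  · intro T hT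
    simp only [Finset.mem_filter, Finset.mem_powersetCard] at hT
    rw [Finset.mem_powersetCard]
    constructor
    · intro y hy
      rw [Finset.mem_erase] at hy ⊢
      exact ⟨hy.1, hT.1.1 hy.2⟩
    · rw [Finset.card_erase_of_mem hT.2, hT.1.2]
      omega
  · intro T hT
    rw [Finset.mem_powersetCard] at hT
    have hiT : i ∉ T := fun h => (Finset.mem_erase.1 (hT.1 h)).1 rfl
    simp only [Finset.mem_filter, Finset.mem_powersetCard]
    refine ⟨⟨?_, ?_⟩, Finset.mem_insert_self i T⟩
    · intro y hy
      rcases Finset.mem_insert.1 hy with h | h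
      · exact h ▸ hi
      · exact (Finset.mem_erase.1 (hT.1 h)).2
    · rw [Finset.card_insert_of_notMem hiT, hT.2]
  · intro T hT
    simp only [Finset.mem_filter] at hT
    exact Finset.insert_erase hT.2
  · intro T hT
    rw [Finset.mem_powersetCard] at hT
    have hiT : i ∉ T := fun h => (Finset.mem_erase.1 (hT.1 h)).1 rfl
    exact Finset.erase_insert hiT
  · intro T hT
    simp only [Finset.mem_filter] at hT
    exact (Finset.mul_prod_erase T x hT.2).symm

/-- A: expansion of (m+1) * esym (m+1) -/
lemma esym_succ_eq (m : ℕ) (S : Finset V) (x : V → ℝ) :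
    ((m : ℝ) + 1) * esym (m+1) S x = ∑ i ∈ S, x i * esym m (S.erase i) x := by
  have h1 : ∀ T ∈ S.powersetCard (m+1), ((m:ℝ)+1) * ∏ j ∈ T, x j
      = ∑ i ∈ S, if i ∈ T then ∏ j ∈ T, x j else 0 := by
    intro T hT
    rw [Finset.mem_powersetCard] at hT
    rw [Finset.sum_ite_mem, Finset.inter_eq_right.2 hT.1, Finset.sum_const, hT.2,
      nsmul_eq_mul]
    push_cast
    ring
  rw [esym, Finset.mul_sum, Finset.sum_congr rfl h1, Finset.sum_comm]
  refine Finset.sum_congr rfl fun i hi => ?_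
  rw [← Finset.sum_filter, sum_filter_mem_powersetCard m S x hi]

/-- B: split esym by membership -/
lemma esym_erase (m : ℕ) (S : Finset V) (x : V → ℝ) {i : V} (hi : i ∈ S) :
    esym (m+1) S x = esym (m+1) (S.erase i) x + x i * esym m (S.erase i) x := by
  rw [← sum_filter_mem_powersetCard m S x hi, esym, esym,
    ← Finset.sum_filter_add_sum_filter_not (S.powersetCard (m+1)) (fun T => i ∈ T), add_comm]
  congr 1
  refine Finset.sum_congr ?_ fun _ _ => rfl
  ext T
  simp only [Finset.mem_filter, Finset.mem_powersetCard, Finset.subset_erase]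
  tauto

lemma esym_one (S : Finset V) (x : V → ℝ) : esym 1 S x = ∑ i ∈ S, x i := by
  have h := esym_succ_eq 0 S x
  simp only [esym_zero, Nat.cast_zero, zero_add, one_mul, mul_one] at h
  exact h

lemma monovary_aux (m : ℕ) (S : Finset V) (x : V → ℝ) (hx : ∀ j ∈ S, 0 ≤ x j) :
    MonovaryOn x (fun i => x i * esym m (S.erase i) x) S := by
  intro i hi j hj hlt
  by_contra hc
  push_neg at hc
  have hij : i ≠ j := by rintro rfl; exact lt_irrefl _ hlt
  have : x j * esym m (S.erase j) x ≤ x i * esym m (S.erase i) x := by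
    rcases m with - | k
    · simp only [esym_zero, mul_one]
      exact hc.le
    · have hjESi : j ∈ S.erase i := Finset.mem_erase.2 ⟨hij.symm, hj⟩
      have hiESj : i ∈ S.erase j := Finset.mem_erase.2 ⟨hij, hi⟩
      rw [esym_erase k (S.erase i) x hjESi, esym_erase k (S.erase j) x hiESj]
      rw [show (S.erase j).erase i = (S.erase i).erase j from Finset.erase_right_comm]
      have hE1 : 0 ≤ esym (k+1) ((S.erase i).erase j) x :=
        esym_nonneg fun y hy => hx y (Finset.mem_of_mem_erase (Finset.mem_of_mem_erase hy))
      nlinarith [hc.le]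
  exact absurd hlt (not_lt.2 this)

lemma esym_step (m : ℕ) (S : Finset V) (x : V → ℝ) (hx : ∀ j ∈ S, 0 ≤ x j) :
    (S.card : ℝ) * (((m : ℝ) + 2) * esym (m+2) S x)
      ≤ ((S.card : ℝ) - ((m : ℝ) + 1)) * (∑ i ∈ S, x i) * esym (m+1) S x := by
  set k : ℝ := (S.card : ℝ) with hk
  set Sx : ℝ := ∑ i ∈ S, x i with hSx
  set E1 : ℝ := esym (m+1) S x with hE1
  have hA2 : ((m : ℝ) + 2) * esym (m+2) S x = ∑ i ∈ S, x i * esym (m+1) (S.erase i) x := by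
    have := esym_succ_eq (m+1) S x
    push_cast at this
    linarith [this]
  have hsplit : ∀ i ∈ S, x i * esym (m+1) (S.erase i) x
      = x i * E1 - x i * (x i * esym m (S.erase i) x) := by
    intro i hi
    rw [hE1, esym_erase m S x hi]
    ring
  have hA2' : ((m : ℝ) + 2) * esym (m+2) S x
      = Sx * E1 - ∑ i ∈ S, x i * (x i * esym m (S.erase i) x) := by
    rw [hA2, Finset.sum_congr rfl hsplit, Finset.sum_sub_distrib, ← Finset.sum_mul, ← hSx]
  have hcheb : Sx * (∑ i ∈ S, x i * esym m (S.erase i) x)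
      ≤ k * ∑ i ∈ S, x i * (x i * esym m (S.erase i) x) :=
    (monovary_aux m S x hx).sum_mul_sum_le_card_mul_sum
  have hA1 : ∑ i ∈ S, x i * esym m (S.erase i) x = ((m : ℝ) + 1) * E1 := by
    rw [hE1, ← esym_succ_eq m S x]
  rw [hA1] at hcheb
  nlinarith [hA2', hcheb]

lemma esym_four_le (S : Finset V) (x : V → ℝ) (hx : ∀ j ∈ S, 0 ≤ x j)
    (hk4 : 4 ≤ S.card) :
    esym 4 S x ≤ (((S.card : ℝ) - 1) * ((S.card : ℝ) - 2) * ((S.card : ℝ) - 3)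
      / (24 * (S.card : ℝ) ^ 3)) * (∑ i ∈ S, x i) ^ 4 := by
  set k : ℝ := (S.card : ℝ) with hkdef
  set Sx : ℝ := ∑ i ∈ S, x i with hSxdef
  have hk : (4 : ℝ) ≤ k := by rw [hkdef]; exact_mod_cast hk4
  have hk0 : (0 : ℝ) < k := by linarith
  have hSx0 : 0 ≤ Sx := Finset.sum_nonneg hx
  have hE2 : 0 ≤ esym 2 S x := esym_nonneg hx
  have hE3 : 0 ≤ esym 3 S x := esym_nonneg hx
  set E2 : ℝ := esym 2 S x with hE2d
  set E3 : ℝ := esym 3 S x with hE3d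
  set E4 : ℝ := esym 4 S x with hE4d
  have h2 : k * (2 * E2) ≤ (k - 1) * Sx * Sx := by
    have := esym_step 0 S x hx
    rw [esym_one] at this
    rw [hkdef, hSxdef, hE2d]
    convert this using 2 <;> norm_num
  have h3 : k * (3 * E3) ≤ (k - 2) * Sx * E2 := by
    have := esym_step 1 S x hx
    rw [hkdef, hSxdef, hE2d, hE3d]
    convert this using 2 <;> norm_num
  have h4 : k * (4 * E4) ≤ (k - 3) * Sx * E3 := by
    have := esym_step 2 S x hx
    rw [hkdef, hSxdef, hE3d, hE4d]
    convert this using 2 <;> norm_num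
  have t2 : 2 * k * E2 ≤ (k - 1) * Sx ^ 2 := by nlinarith [h2]
  have t3 : 6 * k ^ 2 * E3 ≤ (k - 1) * (k - 2) * Sx ^ 3 := by
    have hm1 : 2 * k * (k * (3 * E3)) ≤ 2 * k * ((k - 2) * Sx * E2) :=
      mul_le_mul_of_nonneg_left h3 (by linarith)
    have hm2 : (k - 2) * Sx * (2 * k * E2) ≤ (k - 2) * Sx * ((k - 1) * Sx ^ 2) :=
      mul_le_mul_of_nonneg_left t2 (by nlinarith)
    nlinarith [hm1, hm2]
  have t4 : 24 * k ^ 3 * E4 ≤ (k - 1) * (k - 2) * (k - 3) * Sx ^ 4 := by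
    have hm1 : 6 * k ^ 2 * (k * (4 * E4)) ≤ 6 * k ^ 2 * ((k - 3) * Sx * E3) :=
      mul_le_mul_of_nonneg_left h4 (by positivity)
    have hm2 : (k - 3) * Sx * (6 * k ^ 2 * E3) ≤ (k - 3) * Sx * ((k - 1) * (k - 2) * Sx ^ 3) :=
      mul_le_mul_of_nonneg_left t3 (by nlinarith)
    nlinarith [hm1, hm2]
  rw [div_mul_eq_mul_div, le_div_iff₀ (by positivity)]
  nlinarith [t4]

lemma ratio_mono {k R : ℝ} (hk : 4 ≤ k) (hkR : k ≤ R) :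
    (k - 1) * (k - 2) * (k - 3) / (24 * k ^ 3)
      ≤ (R - 1) * (R - 2) * (R - 3) / (24 * R ^ 3) := by
  have hk0 : (0 : ℝ) < k := by linarith
  have hR0 : (0 : ℝ) < R := by linarith
  rw [div_le_div_iff₀ (by positivity) (by positivity)]
  have a1 : (k - 1) * R ≤ (R - 1) * k := by nlinarith
  have a2 : (k - 2) * R ≤ (R - 2) * k := by nlinarith
  have a3 : (k - 3) * R ≤ (R - 3) * k := by nlinarith
  have hb : ((k - 1) * R) * (((k - 2) * R) * ((k - 3) * R))
      ≤ ((R - 1) * k) * (((R - 2) * k) * ((R - 3) * k)) := by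
    have p1 : (0:ℝ) ≤ (k - 3) * R := by nlinarith
    have p2 : (0:ℝ) ≤ (R - 2) * k := by nlinarith
    have p3 : (0:ℝ) ≤ ((k - 2) * R) * ((k - 3) * R) := by nlinarith
    have p4 : (0:ℝ) ≤ (R - 1) * k := by nlinarith
    exact mul_le_mul a1 (mul_le_mul a2 a3 p1 p2) p3 p4
  nlinarith [hb]


set_option linter.unusedSectionVars false
set_option maxHeartbeats 1000000

open SimpleGraph Finset

section Graph

variable {V : Type} [Fintype V] [DecidableEq V]

/-- weight shifting operation -/
noncomputable def shiftW (w : V → ℝ) (u v : V) : V → ℝ :=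
  Function.update (Function.update w u 0) v (w u + w v)

lemma shiftW_sum (w : V → ℝ) {u v : V} (huv : u ≠ v) :
    ∑ x, shiftW w u v x = ∑ x, w x := by
  have hu : u ∈ (univ : Finset V) \ {v} := by
    simp [Finset.mem_sdiff, huv]
  rw [shiftW, Finset.sum_update_of_mem (Finset.mem_univ v),
    Finset.sum_update_of_mem hu,
    Finset.sum_eq_sum_sdiff_singleton_add (Finset.mem_univ v) w,
    Finset.sum_eq_sum_sdiff_singleton_add hu w]
  ring

lemma shiftW_nonneg (w : V → ℝ) (hw : ∀ x, 0 ≤ w x) (u v : V) :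
    ∀ x, 0 ≤ shiftW w u v x := by
  intro x
  rw [shiftW]
  rcases eq_or_ne x v with h | hxv
  · rw [h, Function.update_self]
    exact add_nonneg (hw u) (hw v)
  · rw [Function.update_of_ne hxv]
    rcases eq_or_ne x u with h | hxu
    · rw [h, Function.update_self]
    · rw [Function.update_of_ne hxu]
      exact hw x

lemma shiftW_apply_u (w : V → ℝ) {u v : V} (huv : u ≠ v) : shiftW w u v u = 0 := by
  rw [shiftW, Function.update_of_ne huv, Function.update_self]

lemma shiftW_apply_v (w : V → ℝ) (u v : V) : shiftW w u v v = w u + w v := by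
  rw [shiftW, Function.update_self]

lemma shiftW_apply (w : V → ℝ) {u v x : V} (hxu : x ≠ u) (hxv : x ≠ v) :
    shiftW w u v x = w x := by
  rw [shiftW, Function.update_of_ne hxv, Function.update_of_ne hxu]

lemma clique4_not_both (G : SimpleGraph V) [DecidableRel G.Adj] {u v : V} (huv : u ≠ v)
    (hadj : ¬ G.Adj u v) {s : Finset V} (hs : s ∈ G.cliqueFinset 4)
    (hus : u ∈ s) (hvs : v ∈ s) : False :=
  hadj ((SimpleGraph.mem_cliqueFinset_iff.1 hs).isClique (Finset.mem_coe.2 hus) (Finset.mem_coe.2 hvs) huv)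

lemma shift_le (G : SimpleGraph V) [DecidableRel G.Adj] (w : V → ℝ) (hw : ∀ x, 0 ≤ w x)
    {u v : V} (huv : u ≠ v) (hadj : ¬ G.Adj u v)
    (hA : ∑ s ∈ (G.cliqueFinset 4).filter (fun s => u ∈ s), ∏ y ∈ s.erase u, w y
        ≤ ∑ s ∈ (G.cliqueFinset 4).filter (fun s => v ∈ s), ∏ y ∈ s.erase v, w y) :
    ∑ s ∈ G.cliqueFinset 4, ∏ y ∈ s, w y
      ≤ ∑ s ∈ G.cliqueFinset 4, ∏ y ∈ s, shiftW w u v y := by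
  set w' := shiftW w u v with hw'def
  have hsplit : ∀ ω : V → ℝ, ∑ s ∈ G.cliqueFinset 4, ∏ y ∈ s, ω y
      = (∑ s ∈ (G.cliqueFinset 4).filter (fun s => u ∈ s), ∏ y ∈ s, ω y)
        + ((∑ s ∈ (G.cliqueFinset 4).filter (fun s => v ∈ s), ∏ y ∈ s, ω y)
        + (∑ s ∈ (G.cliqueFinset 4).filter (fun s => ¬ u ∈ s ∧ ¬ v ∈ s), ∏ y ∈ s, ω y)) := by
    intro ω
    have hA : ((G.cliqueFinset 4).filter (fun s => ¬ u ∈ s)).filter (fun s => v ∈ s)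
        = (G.cliqueFinset 4).filter (fun s => v ∈ s) := by
      rw [Finset.filter_filter]
      ext s
      simp only [Finset.mem_filter]
      constructor
      · rintro ⟨hs, -, hv⟩; exact ⟨hs, hv⟩
      · rintro ⟨hs, hv⟩
        exact ⟨hs, fun hu => clique4_not_both G huv hadj hs hu hv, hv⟩
    rw [← Finset.sum_filter_add_sum_filter_not (G.cliqueFinset 4) (fun s => u ∈ s)
      (fun s => ∏ y ∈ s, ω y),
      ← Finset.sum_filter_add_sum_filter_not ((G.cliqueFinset 4).filter (fun s => ¬ u ∈ s))
      (fun s => v ∈ s) (fun s => ∏ y ∈ s, ω y), hA, Finset.filter_filter]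
  rw [hsplit w, hsplit w']
  have pu' : ∑ s ∈ (G.cliqueFinset 4).filter (fun s => u ∈ s), ∏ y ∈ s, w' y = 0 :=
    Finset.sum_eq_zero fun s hs =>
      Finset.prod_eq_zero (Finset.mem_filter.1 hs).2 (shiftW_apply_u w huv)
  have pu : ∑ s ∈ (G.cliqueFinset 4).filter (fun s => u ∈ s), ∏ y ∈ s, w y
      = w u * ∑ s ∈ (G.cliqueFinset 4).filter (fun s => u ∈ s), ∏ y ∈ s.erase u, w y := by
    rw [Finset.mul_sum]
    exact Finset.sum_congr rfl fun s hs =>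
      (Finset.mul_prod_erase s w (Finset.mem_filter.1 hs).2).symm
  have hvprod : ∀ s ∈ (G.cliqueFinset 4).filter (fun s => v ∈ s),
      ∏ y ∈ s.erase v, w' y = ∏ y ∈ s.erase v, w y := by
    intro s hs
    obtain ⟨hsC, hvs⟩ := Finset.mem_filter.1 hs
    refine Finset.prod_congr rfl fun y hy => shiftW_apply w ?_ (Finset.ne_of_mem_erase hy)
    intro hyu
    exact clique4_not_both G huv hadj hsC (hyu ▸ Finset.mem_of_mem_erase hy) hvs
  have pv : ∑ s ∈ (G.cliqueFinset 4).filter (fun s => v ∈ s), ∏ y ∈ s, w y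
      = w v * ∑ s ∈ (G.cliqueFinset 4).filter (fun s => v ∈ s), ∏ y ∈ s.erase v, w y := by
    rw [Finset.mul_sum]
    exact Finset.sum_congr rfl fun s hs =>
      (Finset.mul_prod_erase s w (Finset.mem_filter.1 hs).2).symm
  have pv' : ∑ s ∈ (G.cliqueFinset 4).filter (fun s => v ∈ s), ∏ y ∈ s, w' y
      = (w u + w v) * ∑ s ∈ (G.cliqueFinset 4).filter (fun s => v ∈ s), ∏ y ∈ s.erase v, w y := by
    rw [Finset.mul_sum]
    refine Finset.sum_congr rfl fun s hs => ?_
    obtain ⟨hsC, hvs⟩ := Finset.mem_filter.1 hs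
    rw [← Finset.mul_prod_erase s w' hvs, hw'def, shiftW_apply_v, hvprod s hs]
  have p0 : ∑ s ∈ (G.cliqueFinset 4).filter (fun s => ¬ u ∈ s ∧ ¬ v ∈ s), ∏ y ∈ s, w' y
      = ∑ s ∈ (G.cliqueFinset 4).filter (fun s => ¬ u ∈ s ∧ ¬ v ∈ s), ∏ y ∈ s, w y := by
    refine Finset.sum_congr rfl fun s hs => Finset.prod_congr rfl fun y hy => ?_
    obtain ⟨-, hus, hvs⟩ := Finset.mem_filter.1 hs
    exact shiftW_apply w (fun h => hus (h ▸ hy)) (fun h => hvs (h ▸ hy))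
  rw [pu, pu', pv, pv', p0]
  have := mul_le_mul_of_nonneg_left hA (hw u)
  linarith

lemma zykov_clique_case (r : ℕ) (hr : 4 ≤ r) (G : SimpleGraph V) [DecidableRel G.Adj]
    (hfree : G.CliqueFree (r+1)) (w : V → ℝ) (hw : ∀ x, 0 ≤ w x)
    (T : Finset V) (hT0 : ∀ x, x ∉ T → w x = 0)
    (hTadj : ∀ u ∈ T, ∀ v ∈ T, u ≠ v → G.Adj u v) :
    ∑ s ∈ G.cliqueFinset 4, ∏ y ∈ s, w y
      ≤ ((r:ℝ)-1)*((r:ℝ)-2)*((r:ℝ)-3)/(24*(r:ℝ)^3) * (∑ x, w x)^4 := by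
  have hrR : (4:ℝ) ≤ (r:ℝ) := by exact_mod_cast hr
  have hsum0 : ∑ x, w x = ∑ x ∈ T, w x :=
    (Finset.sum_subset (Finset.subset_univ T) (fun x _ hx => hT0 x hx)).symm
  have hsumnn : 0 ≤ ∑ x ∈ T, w x := Finset.sum_nonneg fun x _ => hw x
  -- T has at most r elements
  have hTr : T.card ≤ r := by
    by_contra hc
    push_neg at hc
    obtain ⟨t, htT, htc⟩ := Finset.exists_subset_card_eq (n := r+1) hc
    refine hfree t ⟨?_, htc⟩
    intro a ha b hb hab
    exact hTadj a (htT ha) b (htT hb) hab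
  -- rewrite the sum as esym 4 T w
  have hstep1 : ∑ s ∈ G.cliqueFinset 4, ∏ y ∈ s, w y
      = ∑ s ∈ (G.cliqueFinset 4).filter (fun s => s ⊆ T), ∏ y ∈ s, w y := by
    refine (Finset.sum_filter_of_ne fun s hs hne => ?_).symm
    intro y hy
    by_contra hyT
    exact hne (Finset.prod_eq_zero hy (hT0 y hyT))
  have hstep2 : (G.cliqueFinset 4).filter (fun s => s ⊆ T) = T.powersetCard 4 := by
    ext s
    simp only [Finset.mem_filter, Finset.mem_powersetCard, SimpleGraph.mem_cliqueFinset_iff]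
    constructor
    · rintro ⟨hs, hsT⟩; exact ⟨hsT, hs.card_eq⟩
    · rintro ⟨hsT, hc⟩
      refine ⟨⟨?_, hc⟩, hsT⟩
      intro a ha b hb hab
      exact hTadj a (hsT ha) b (hsT hb) hab
  rw [hstep1, hstep2, hsum0]
  show esym 4 T w ≤ _
  rcases lt_or_ge T.card 4 with hc | hc
  · have : T.powersetCard 4 = ∅ := Finset.powersetCard_eq_empty.2 hc
    rw [esym, this, Finset.sum_empty]
    have h1 : (0:ℝ) ≤ ((r:ℝ)-1)*((r:ℝ)-2)*((r:ℝ)-3) :=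
      mul_nonneg (mul_nonneg (by linarith) (by linarith)) (by linarith)
    have h2 : (0:ℝ) ≤ (∑ x ∈ T, w x)^4 := by positivity
    have h3 : (0:ℝ) < 24*(r:ℝ)^3 := by nlinarith
    positivity
  · have hm := esym_four_le T w (fun j _ => hw j) hc
    have hmono := ratio_mono (k := (T.card : ℝ)) (R := (r:ℝ)) (by exact_mod_cast hc)
      (by exact_mod_cast hTr)
    refine hm.trans ?_
    exact mul_le_mul_of_nonneg_right hmono (by positivity)

lemma zykov (r : ℕ) (hr : 4 ≤ r) (G : SimpleGraph V) [DecidableRel G.Adj]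
    (hfree : G.CliqueFree (r+1)) :
    ∀ (m : ℕ) (w : V → ℝ), (∀ x, 0 ≤ w x) → ∀ S : Finset V, (∀ x, x ∉ S → w x = 0) →
      S.card ≤ m →
    ∑ s ∈ G.cliqueFinset 4, ∏ y ∈ s, w y
      ≤ ((r:ℝ)-1)*((r:ℝ)-2)*((r:ℝ)-3)/(24*(r:ℝ)^3) * (∑ x, w x)^4 := by
  intro m
  induction m with
  | zero =>
    intro w hw S hS hcard
    have hS0 : S = ∅ := Finset.card_eq_zero.1 (le_antisymm hcard (Nat.zero_le _))
    refine zykov_clique_case r hr G hfree w hw S hS ?_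
    intro u hu
    simp [hS0] at hu
  | succ m ih =>
    intro w hw S hS hcard
    by_cases hp : ∃ u ∈ S, ∃ v ∈ S, w u ≠ 0 ∧ w v ≠ 0 ∧ u ≠ v ∧ ¬ G.Adj u v
    · obtain ⟨u, hu, v, hv, hwu, hwv, huv, hadj⟩ := hp
      -- wlog on the A-values
      have key : ∀ a b : V, a ∈ S → b ∈ S → a ≠ b → ¬ G.Adj a b →
          (∑ s ∈ (G.cliqueFinset 4).filter (fun s => a ∈ s), ∏ y ∈ s.erase a, w y
            ≤ ∑ s ∈ (G.cliqueFinset 4).filter (fun s => b ∈ s), ∏ y ∈ s.erase b, w y) →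
          ∑ s ∈ G.cliqueFinset 4, ∏ y ∈ s, w y
            ≤ ((r:ℝ)-1)*((r:ℝ)-2)*((r:ℝ)-3)/(24*(r:ℝ)^3) * (∑ x, w x)^4 := by
        intro a b haS hbS hab hnadj hA
        have h1 := shift_le G w hw hab hnadj hA
        have h2 : ∀ x, x ∉ S.erase a → shiftW w a b x = 0 := by
          intro x hx
          rcases eq_or_ne x a with rfl | hxa
          · exact shiftW_apply_u w hab
          · rcases eq_or_ne x b with rfl | hxb
            · exact absurd (Finset.mem_erase.2 ⟨hxa, hbS⟩) hx
            · rw [shiftW_apply w hxa hxb]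
              refine hS x fun hxS => hx (Finset.mem_erase.2 ⟨hxa, hxS⟩)
        have h3 : (S.erase a).card ≤ m := by
          have := Finset.card_erase_of_mem haS
          have h4 : 1 ≤ S.card := Finset.card_pos.2 ⟨a, haS⟩
          omega
        have h5 := ih (shiftW w a b) (shiftW_nonneg w hw a b) (S.erase a) h2 h3
        rw [shiftW_sum w hab] at h5
        exact h1.trans h5
      rcases le_total
        (∑ s ∈ (G.cliqueFinset 4).filter (fun s => u ∈ s), ∏ y ∈ s.erase u, w y)
        (∑ s ∈ (G.cliqueFinset 4).filter (fun s => v ∈ s), ∏ y ∈ s.erase v, w y) with hA | hA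
      · exact key u v hu hv huv hadj hA
      · exact key v u hv hu huv.symm (fun h => hadj h.symm) hA
    · push_neg at hp
      classical
      refine zykov_clique_case r hr G hfree w hw (S.filter (fun x => w x ≠ 0)) ?_ ?_
      · intro x hx
        by_cases hxS : x ∈ S
        · by_contra hwx
          exact hx (Finset.mem_filter.2 ⟨hxS, hwx⟩)
        · exact hS x hxS
      · intro a ha b hb hab
        obtain ⟨haS, hwa⟩ := Finset.mem_filter.1 ha
        obtain ⟨hbS, hwb⟩ := Finset.mem_filter.1 hb
        exact hp a haS b hbS hwa hwb hab

lemma card_clique4_le (r : ℕ) (hr : 4 ≤ r) (G : SimpleGraph V) [DecidableRel G.Adj]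
    (hfree : G.CliqueFree (r+1)) :
    ((G.cliqueFinset 4).card : ℝ)
      ≤ ((r:ℝ)-1)*((r:ℝ)-2)*((r:ℝ)-3)/(24*(r:ℝ)^3) * (Fintype.card V)^4 := by
  have h := zykov r hr G hfree (Fintype.card V) (fun _ => 1) (fun _ => zero_le_one)
    Finset.univ (fun x hx => absurd (Finset.mem_univ x) hx) (le_of_eq (Finset.card_univ))
  simpa using h

end Graph

section Bridge

variable {V : Type} [Fintype V] [DecidableEq V]

lemma subgraph_complete_adj {G : SimpleGraph V} (H : G.Subgraph) {n : ℕ}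
    (e : (⊤ : SimpleGraph (Fin n)) ≃g H.coe) {a b : V} (ha : a ∈ H.verts)
    (hb : b ∈ H.verts) (hab : a ≠ b) : H.Adj a b := by
  have h1 : (⟨a, ha⟩ : H.verts) ≠ ⟨b, hb⟩ := fun h => hab (congrArg Subtype.val h)
  have h2 : e.symm ⟨a, ha⟩ ≠ e.symm ⟨b, hb⟩ := fun h => h1 (e.symm.injective h)
  have h3 : H.coe.Adj (e (e.symm ⟨a, ha⟩)) (e (e.symm ⟨b, hb⟩)) :=
    e.map_adj_iff.2 (by simpa using h2)
  simpa using h3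

lemma subgraph_verts_card {G : SimpleGraph V} (H : G.Subgraph) {n : ℕ}
    (e : (⊤ : SimpleGraph (Fin n)) ≃g H.coe) : H.verts.toFinite.toFinset.card = n := by
  rw [← Set.ncard_eq_toFinset_card, ← Nat.card_coe_set_eq]
  rw [Nat.card_congr e.toEquiv.symm, Nat.card_eq_fintype_card, Fintype.card_fin]

lemma subgraphCount_K4_le (G : SimpleGraph V) [DecidableRel G.Adj] :
    subgraphCount (⊤ : SimpleGraph (Fin 4)) G ≤ (G.cliqueFinset 4).card := by
  rw [subgraphCount, ← Nat.card_eq_finsetCard]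
  have hmap : ∀ H : {H : G.Subgraph // Nonempty ((⊤ : SimpleGraph (Fin 4)) ≃g H.coe)},
      H.1.verts.toFinite.toFinset ∈ G.cliqueFinset 4 := by
    rintro ⟨H, ⟨e⟩⟩
    rw [G.mem_cliqueFinset_iff]
    constructor
    · intro a ha b hb hab
      simp only [Finset.mem_coe, Set.Finite.mem_toFinset] at ha hb
      exact H.adj_sub (subgraph_complete_adj H e ha hb hab)
    · exact subgraph_verts_card H e
  refine Nat.card_le_card_of_injective
    (fun H => (⟨H.1.verts.toFinite.toFinset, hmap H⟩ :
      {s : Finset V // s ∈ G.cliqueFinset 4})) ?_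
  rintro ⟨H1, he1⟩ ⟨H2, he2⟩ h
  simp only [Subtype.mk.injEq] at h ⊢
  obtain ⟨e1⟩ := he1
  obtain ⟨e2⟩ := he2
  have hv : H1.verts = H2.verts := by
    rw [← Set.Finite.coe_toFinset H1.verts.toFinite, ← Set.Finite.coe_toFinset H2.verts.toFinite,
      h]
  refine SimpleGraph.Subgraph.ext hv ?_
  funext a b
  apply propext
  constructor
  · intro hadj
    exact subgraph_complete_adj H2 e2 (hv ▸ H1.edge_vert hadj) (hv ▸ H1.edge_vert hadj.symm)
      (H1.adj_sub hadj).ne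
  · intro hadj
    exact subgraph_complete_adj H1 e1 (hv ▸ H2.edge_vert hadj) (hv ▸ H2.edge_vert hadj.symm)
      (H2.adj_sub hadj).ne

lemma cliqueFree_of_isFFree (n : ℕ) (G : SimpleGraph V)
    (h : IsFFree (⊤ : SimpleGraph (Fin n)) G) : G.CliqueFree n := by
  intro t ht
  let H : G.Subgraph :=
    { verts := ↑t
      Adj := fun a b => a ≠ b ∧ a ∈ t ∧ b ∈ t
      adj_sub := fun {a b} hab =>
        ht.isClique (Finset.mem_coe.2 hab.2.1) (Finset.mem_coe.2 hab.2.2) hab.1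
      edge_vert := fun {a b} hab => Finset.mem_coe.2 hab.2.1
      symm := ⟨fun a b hab => ⟨hab.1.symm, hab.2.2, hab.2.1⟩⟩ }
  have hcard : Fintype.card ↥H.verts = n := by
    have h1 : Fintype.card ↥H.verts = Fintype.card ↥t :=
      Fintype.card_congr (Equiv.subtypeEquivRight (fun x => Finset.mem_coe))
    rw [h1, Fintype.card_coe, ht.card_eq]
  let e : Fin n ≃ ↥H.verts := (Fintype.equivFinOfCardEq hcard).symm
  have hiso : (⊤ : SimpleGraph (Fin n)) ≃g H.coe := by
    refine ⟨e, ?_⟩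
    intro a b
    rw [SimpleGraph.Subgraph.coe_adj, top_adj]
    constructor
    · rintro ⟨hne, -, -⟩
      exact fun hab => hne (congrArg (fun x => (e x : V)) hab)
    · intro hab
      refine ⟨fun hv => hab (e.injective (Subtype.ext hv)), ?_, ?_⟩
      · exact Finset.mem_coe.1 (e a).2
      · exact Finset.mem_coe.1 (e b).2
  exact (h H).false hiso

end Bridge

theorem K4_count_upper_bound (r : ℕ) (hr : 4 ≤ r) :
    ∀ ε : ℝ, 0 < ε → ∃ n₀ : ℕ, ∀ n : ℕ, n₀ ≤ n →
      ∀ G : SimpleGraph (Fin n), IsFFree (⊤ : SimpleGraph (Fin (r + 1))) G →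
        (subgraphCount (⊤ : SimpleGraph (Fin 4)) G : ℝ) ≤
          (((r : ℝ) ^ 3 - 6 * r ^ 2 + 11 * r - 6) / r ^ 3) * n.choose 4 + ε * n ^ 4 := by
  intro ε hε
  refine ⟨max 4 ⌈(4*ε)⁻¹⌉₊, fun n hn G hG => ?_⟩
  classical
  have hdec : DecidableRel G.Adj := Classical.decRel _
  have hn4 : 4 ≤ n := le_trans (le_max_left _ _) hn
  have hn4R : (4:ℝ) ≤ (n:ℝ) := by exact_mod_cast hn4
  have hεn : 1 ≤ 4*ε*(n:ℝ) := by
    have h1 : (⌈(4*ε)⁻¹⌉₊ : ℝ) ≤ (n:ℝ) := by exact_mod_cast le_trans (le_max_right _ _) hn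
    have h2 : (4*ε)⁻¹ ≤ (n:ℝ) := le_trans (Nat.le_ceil _) h1
    have h3 : (0:ℝ) < 4*ε := by linarith
    calc (1:ℝ) = (4*ε) * (4*ε)⁻¹ := (mul_inv_cancel₀ (ne_of_gt h3)).symm
    _ ≤ (4*ε) * (n:ℝ) := mul_le_mul_of_nonneg_left h2 (le_of_lt h3)
    _ = 4*ε*(n:ℝ) := by ring
  have hfree := cliqueFree_of_isFFree (r+1) G hG
  have h1 : (subgraphCount (⊤ : SimpleGraph (Fin 4)) G : ℝ) ≤ ((G.cliqueFinset 4).card : ℝ) :=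
    Nat.cast_le.2 (subgraphCount_K4_le G)
  have h2 := card_clique4_le r hr G hfree
  rw [Fintype.card_fin] at h2
  set R := (r:ℝ) with hRdef
  have hR4 : (4:ℝ) ≤ R := by rw [hRdef]; exact_mod_cast hr
  have hRpos : (0:ℝ) < R := by linarith
  set X := (n:ℝ)*((n:ℝ)-1)*((n:ℝ)-2)*((n:ℝ)-3) with hXdef
  have hchoose : (n.choose 4 : ℝ) * 24 = X := by
    have hnat : n.choose 4 * 24 = n * (n-1) * (n-2) * (n-3) := by
      have h24 : (24 : ℕ) = Nat.factorial 4 := by norm_num [Nat.factorial]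
      rw [Nat.choose_eq_descFactorial_div_factorial, h24,
        Nat.div_mul_cancel (Nat.factorial_dvd_descFactorial n 4)]
      simp only [Nat.descFactorial_succ, Nat.descFactorial_zero, mul_one, Nat.sub_zero]
      ring
    have hcast : ((n * (n-1) * (n-2) * (n-3) : ℕ) : ℝ) = X := by
      rw [hXdef]
      rw [Nat.cast_mul, Nat.cast_mul, Nat.cast_mul,
        Nat.cast_sub (by omega : 1 ≤ n), Nat.cast_sub (by omega : 2 ≤ n),
        Nat.cast_sub (by omega : 3 ≤ n)]
      norm_num
    rw [show (n.choose 4 : ℝ) * 24 = ((n.choose 4 * 24 : ℕ) : ℝ) by push_cast; ring,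
      hnat, hcast]
  have hP0 : (0:ℝ) ≤ (R-1)*(R-2)*(R-3) :=
    mul_nonneg (mul_nonneg (by linarith) (by linarith)) (by linarith)
  have hPR : (R-1)*(R-2)*(R-3) ≤ R^3 := by nlinarith [sq_nonneg (R-4), sq_nonneg R]
  have hkey : (R-1)*(R-2)*(R-3)/(24*R^3) * (n:ℝ)^4
      ≤ ((R^3 - 6*R^2 + 11*R - 6)/R^3) * (n.choose 4 : ℝ) + ε * (n:ℝ)^4 := by
    have hfact : (R^3 - 6*R^2 + 11*R - 6) = (R-1)*(R-2)*(R-3) := by ring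
    rw [hfact]
    have hc2 : ((R-1)*(R-2)*(R-3)/R^3) * (n.choose 4:ℝ)
        = (R-1)*(R-2)*(R-3) * X / (24*R^3) := by
      rw [div_mul_eq_mul_div, div_eq_div_iff (by positivity) (by positivity)]
      linear_combination ((R-1)*(R-2)*(R-3)*R^3) * hchoose
    rw [hc2, div_mul_eq_mul_div, div_le_iff₀ (by positivity : (0:ℝ) < 24*R^3), add_mul,
      div_mul_cancel₀ _ (ne_of_gt (by positivity : (0:ℝ) < 24*R^3))]
    have e3 : (n:ℝ)^4 - X ≤ 6*(n:ℝ)^3 := by rw [hXdef]; nlinarith [hn4R]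
    have q1 : (R-1)*(R-2)*(R-3) * ((n:ℝ)^4 - X) ≤ (R-1)*(R-2)*(R-3) * (6*(n:ℝ)^3) :=
      mul_le_mul_of_nonneg_left e3 hP0
    have q2 : (R-1)*(R-2)*(R-3) * (6*(n:ℝ)^3) ≤ R^3 * (6*(n:ℝ)^3) :=
      mul_le_mul_of_nonneg_right hPR (by positivity)
    have q3 : 6*(n:ℝ)^3 ≤ 24*ε*(n:ℝ)^4 := by
      nlinarith [mul_le_mul_of_nonneg_left hεn (by positivity : (0:ℝ) ≤ 6*(n:ℝ)^3)]
    have q4 : R^3 * (6*(n:ℝ)^3) ≤ R^3 * (24*ε*(n:ℝ)^4) :=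
      mul_le_mul_of_nonneg_left q3 (by positivity)
    nlinarith [q1, q2, q4]
  calc (subgraphCount (⊤ : SimpleGraph (Fin 4)) G : ℝ)
      ≤ ((G.cliqueFinset 4).card : ℝ) := h1
    _ ≤ (R-1)*(R-2)*(R-3)/(24*R^3) * (n:ℝ)^4 := h2
    _ ≤ ((R^3 - 6*R^2 + 11*R - 6)/R^3) * (n.choose 4 : ℝ) + ε * (n:ℝ)^4 := hkey
end

section
/- Let r ≥ 2 and n be positive integers with r dividing n. Then the number of P_3 subgraphs of the Turán graph T_r(n) is exactly ν(P_3, T_r(n)) = C(r,2)·(n/r)^2·( (n/r − 1)^2 + (n − 2n/r)·(n − 3) ). -/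
open SimpleGraph Finset

section
variable {a b c d a' b' c' d' : V}
/-- raw adjacency of a path tuple -/
def pAdj (a b c d x y : V) : Prop :=
  (x = a ∧ y = b ∨ x = b ∧ y = a) ∨ (x = b ∧ y = c ∨ x = c ∧ y = b) ∨
    (x = c ∧ y = d ∨ x = d ∧ y = c)

lemma pAdj_nbr_a (hab : a ≠ b) (hbc : b ≠ c) (hcd : c ≠ d) (hac : a ≠ c) (had : a ≠ d)
    (hbd : b ≠ d) : ∀ y, pAdj a b c d a y ↔ y = b := by
  intro y; unfold pAdj; constructor
  · rintro ((⟨_, rfl⟩ | ⟨rfl, rfl⟩) | (⟨rfl, rfl⟩ | ⟨rfl, rfl⟩) | (⟨rfl, rfl⟩ | ⟨rfl, rfl⟩)) <;>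
      tauto
  · rintro rfl; tauto

lemma pAdj_rev : ∀ x y, pAdj a b c d x y ↔ pAdj d c b a x y := by unfold pAdj; tauto

lemma pAdj_symm : ∀ x y, pAdj a b c d x y → pAdj a b c d y x := by unfold pAdj; tauto

lemma pAdj_supp : ∀ x y, pAdj a b c d x y → x = a ∨ x = b ∨ x = c ∨ x = d := by
  unfold pAdj; tauto

lemma pAdj_ab : pAdj a b c d a b := by unfold pAdj; tauto
lemma pAdj_bc : pAdj a b c d b c := by unfold pAdj; tauto
lemma pAdj_cd : pAdj a b c d c d := by unfold pAdj; tauto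

/-- endpoint localization -/
lemma pAdj_endpoint (hab : a' ≠ b') (hbc : b' ≠ c') (hcd : c' ≠ d') (hac : a' ≠ c')
    (had : a' ≠ d') (hbd : b' ≠ d')
    (hA : ∀ x y, pAdj a b c d x y ↔ pAdj a' b' c' d' x y)
    (hab2 : a ≠ b) (hbc2 : b ≠ c) (hcd2 : c ≠ d) (hac2 : a ≠ c) (had2 : a ≠ d)
    (hbd2 : b ≠ d) : a = a' ∨ a = d' := by
  have h1 : pAdj a' b' c' d' a b := (hA a b).1 pAdj_ab
  rcases pAdj_supp _ _ h1 with h | h | h | h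
  · exact Or.inl h
  · -- a = b' : then a is adjacent to both a' and c', but a has unique neighbor b
    exfalso
    have k1 : pAdj a b c d a a' := (hA a a').2 (by rw [← h] at *; unfold pAdj; tauto)
    have k2 : pAdj a b c d a c' := (hA a c').2 (by rw [← h] at *; unfold pAdj; tauto)
    have e1 := (pAdj_nbr_a hab2 hbc2 hcd2 hac2 had2 hbd2 a').1 k1
    have e2 := (pAdj_nbr_a hab2 hbc2 hcd2 hac2 had2 hbd2 c').1 k2
    exact hac (e1.trans e2.symm)
  · exfalso
    have k1 : pAdj a b c d a b' := (hA a b').2 (by rw [← h] at *; unfold pAdj; tauto)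
    have k2 : pAdj a b c d a d' := (hA a d').2 (by rw [← h] at *; unfold pAdj; tauto)
    have e1 := (pAdj_nbr_a hab2 hbc2 hcd2 hac2 had2 hbd2 b').1 k1
    have e2 := (pAdj_nbr_a hab2 hbc2 hcd2 hac2 had2 hbd2 d').1 k2
    exact hbd (e1.trans e2.symm)
  · exact Or.inr h

lemma pAdj_inj [LinearOrder V]
    (hab : a ≠ b) (hbc : b ≠ c) (hcd : c ≠ d) (hac : a ≠ c) (had : a < d) (hbd : b ≠ d)
    (hab' : a' ≠ b') (hbc' : b' ≠ c') (hcd' : c' ≠ d') (hac' : a' ≠ c') (had' : a' < d')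
    (hbd' : b' ≠ d')
    (hA : ∀ x y, pAdj a b c d x y ↔ pAdj a' b' c' d' x y) :
    a = a' ∧ b = b' ∧ c = c' ∧ d = d' := by
  have hA' : ∀ x y, pAdj a' b' c' d' x y ↔ pAdj a b c d x y := fun x y => (hA x y).symm
  have hAr : ∀ x y, pAdj d c b a x y ↔ pAdj a' b' c' d' x y := by
    intro x y; rw [← pAdj_rev]; exact hA x y
  have hAr' : ∀ x y, pAdj d' c' b' a' x y ↔ pAdj a b c d x y := by
    intro x y; rw [← pAdj_rev]; exact hA' x y
  have ea := pAdj_endpoint hab' hbc' hcd' hac' had'.ne hbd' hA hab hbc hcd hac had.ne hbd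
  have ed := pAdj_endpoint hab' hbc' hcd' hac' had'.ne hbd'
    hAr hcd.symm hbc.symm hab.symm hbd.symm (Ne.symm had.ne) hac.symm
  have ea' := pAdj_endpoint hab hbc hcd hac had.ne hbd hA' hab' hbc' hcd' hac' had'.ne hbd'
  have haa : a = a' := by
    rcases ea with h | h
    · exact h
    · exfalso
      rcases ea' with h' | h'
      · exact had'.ne (h'.trans h)
      · have k1 : a < a' := by rw [h']; exact had
        have k2 : a' < a := by rw [h]; exact had'
        exact absurd (k1.trans k2) (lt_irrefl _)
  have hdd : d = d' := by
    rcases ed with h | h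
    · exact absurd (h.trans haa.symm) had.ne'
    · exact h
  have hb : b = b' := by
    have k := (hA a b).1 pAdj_ab
    rw [haa] at k
    exact (pAdj_nbr_a hab' hbc' hcd' hac' had'.ne hbd' b).1 k
  have hc : c = c' := by
    have k := (hA d c).1 (pAdj_symm _ _ pAdj_cd)
    rw [hdd, pAdj_rev] at k
    exact (pAdj_nbr_a hcd'.symm hbc'.symm hab'.symm hbd'.symm had'.ne' hac'.symm c).1 k
  exact ⟨haa, hb, hc, hdd⟩
end

/-- Counting elements of Fin (r*m) by a predicate on their residue mod r. -/
lemma count_residues (r m : ℕ) (hr : 0 < r) (p : ℕ → Prop) [DecidablePred p] :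
    ((univ : Finset (Fin (r * m))).filter (fun a => p ((a.val) % r))).card
      = m * ((Finset.range r).filter p).card := by
  have hprod : m * ((Finset.range r).filter p).card
      = ((univ : Finset (Fin m)) ×ˢ ((Finset.range r).filter p)).card := by
    rw [Finset.card_product, Finset.card_univ, Fintype.card_fin]
  rw [hprod]
  apply Finset.card_nbij (fun a : Fin (r * m) =>
    ((⟨(a : ℕ) / r, Nat.div_lt_of_lt_mul a.2⟩ : Fin m), (a.val) % r))
  · intro a ha
    simp only [Finset.mem_coe, Finset.mem_filter, Finset.mem_univ, true_and] at ha
    simp only [Finset.mem_coe, Finset.mem_product, Finset.mem_univ, true_and, Finset.mem_filter,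
      Finset.mem_range]
    exact ⟨Nat.mod_lt _ hr, ha⟩
  · intro a _ b _ h
    simp only [Prod.mk.injEq, Fin.mk.injEq] at h
    obtain ⟨h1, h2⟩ := h
    apply Fin.ext
    rw [← Nat.div_add_mod (a : ℕ) r, ← Nat.div_add_mod (b : ℕ) r, h1, h2]
  · rintro ⟨⟨q, hq⟩, s⟩ hmem
    simp only [Finset.mem_coe, Finset.mem_product, Finset.mem_univ, true_and,
      Finset.mem_filter, Finset.mem_range] at hmem
    obtain ⟨hs, hps⟩ := hmem
    have hlt : s + q * r < r * m := by
      have hq1 : q + 1 ≤ m := hq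
      have key : q * r + r ≤ r * m := by
        calc q * r + r = (q + 1) * r := by ring
        _ ≤ m * r := Nat.mul_le_mul_right r hq1
        _ = r * m := mul_comm m r
      omega
    refine ⟨⟨s + q * r, hlt⟩, ?_, ?_⟩
    · simp only [Finset.mem_coe, Finset.mem_filter, Finset.mem_univ, true_and]
      simpa [Nat.add_mul_mod_self_right, Nat.mod_eq_of_lt hs] using hps
    · have h1 : (s + q * r) % r = s := by
        simp [Nat.add_mul_mod_self_right, Nat.mod_eq_of_lt hs]
      have h2 : (s + q * r) / r = q := by
        rw [Nat.add_mul_div_right _ _ hr, Nat.div_eq_of_lt hs, zero_add]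
      simp [h1, h2]

lemma count_one_class (r m : ℕ) (hr : 0 < r) (s : ℕ) (hs : s < r) :
    ((univ : Finset (Fin (r * m))).filter (fun a => (a.val) % r = s)).card = m := by
  rw [count_residues r m hr (fun x => x = s)]
  have : (Finset.range r).filter (fun x => x = s) = {s} := by
    ext x; simp only [Finset.mem_filter, Finset.mem_range, Finset.mem_singleton]
    constructor
    · rintro ⟨_, rfl⟩; rfl
    · rintro rfl; exact ⟨hs, rfl⟩
  rw [this]; simp

lemma count_ne_class (r m : ℕ) (hr : 0 < r) (s : ℕ) (hs : s < r) :
    ((univ : Finset (Fin (r * m))).filter (fun a => (a.val) % r ≠ s)).card = (r - 1) * m := by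
  rw [count_residues r m hr (fun x => x ≠ s)]
  rw [Finset.filter_ne', Finset.card_erase_of_mem (Finset.mem_range.2 hs), Finset.card_range]
  ring

lemma count_ne_two_classes (r m : ℕ) (hr : 0 < r) (s t : ℕ) (hs : s < r) (ht : t < r)
    (hst : s ≠ t) :
    ((univ : Finset (Fin (r * m))).filter
      (fun a => (a.val) % r ≠ s ∧ (a.val) % r ≠ t)).card = (r - 2) * m := by
  rw [count_residues r m hr (fun x => x ≠ s ∧ x ≠ t)]
  have : (Finset.range r).filter (fun x => x ≠ s ∧ x ≠ t)
      = ((Finset.range r).erase s).erase t := by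
    ext x
    simp only [Finset.mem_filter, Finset.mem_erase, Finset.mem_range]
    tauto
  rw [this, Finset.card_erase_of_mem, Finset.card_erase_of_mem (Finset.mem_range.2 hs),
    Finset.card_range]
  · have h2 : r - 1 - 1 = r - 2 := by omega
    rw [h2]; ring
  · exact Finset.mem_erase.2 ⟨hst.symm, Finset.mem_range.2 ht⟩

lemma card_prod_ne {α : Type*} [DecidableEq α] (s t : Finset α) :
    ((s ×ˢ t).filter (fun q => q.1 ≠ q.2)).card = s.card * t.card - (s ∩ t).card := by
  have key := Finset.card_filter_add_card_filter_not
    (s := s ×ˢ t) (p := fun q => q.1 ≠ q.2)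
  have hdiag : ((s ×ˢ t).filter (fun q => ¬q.1 ≠ q.2)).card = (s ∩ t).card := by
    apply Finset.card_nbij (fun q => q.1)
    · intro q hq
      simp only [Finset.mem_coe, Finset.mem_filter, Finset.mem_product, not_not] at hq
      obtain ⟨⟨h1, h2⟩, h3⟩ := hq
      simp only [Finset.mem_coe, Finset.mem_inter]
      exact ⟨h1, h3 ▸ h2⟩
    · intro q hq q' hq' h
      simp only [Finset.coe_filter, Set.mem_setOf_eq, not_not] at hq hq'
      have h' : q.1 = q'.1 := h
      exact Prod.ext h' (by rw [← hq.2, ← hq'.2]; exact h')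
    · intro x hx
      simp only [Finset.coe_inter, Set.mem_inter_iff, Finset.mem_coe] at hx
      exact ⟨(x, x), by simp [Finset.mem_product, hx.1, hx.2], rfl⟩
  rw [Finset.card_product] at key
  omega

/-- Fiberwise counting for a filtered product over `univ`. -/
lemma card_filter_univ_prod {α β : Type*} [Fintype α] [Fintype β] [DecidableEq α]
    (P : α → β → Prop) [∀ a b, Decidable (P a b)] :
    ((univ : Finset (α × β)).filter (fun p => P p.1 p.2)).card
      = ∑ a : α, ((univ : Finset β).filter (P a)).card := by
  rw [Finset.card_eq_sum_card_fiberwise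
    (f := Prod.fst) (t := univ) (fun x _ => Finset.mem_univ _)]
  refine Finset.sum_congr rfl (fun a _ => ?_)
  apply Finset.card_nbij (fun q => q.2)
  · intro q hq
    simp only [Finset.mem_coe, Finset.mem_filter, Finset.mem_univ, true_and] at hq ⊢
    exact hq.2 ▸ hq.1
  · intro q hq q' hq' h
    simp only [Finset.coe_filter, Set.mem_setOf_eq] at hq hq'
    exact Prod.ext (hq.2.trans hq'.2.symm) h
  · intro y hy
    simp only [Finset.coe_filter, Finset.mem_coe, Finset.mem_filter, Finset.mem_univ, true_and,
      Set.mem_setOf_eq] at hy ⊢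
    exact ⟨(a, y), ⟨hy, rfl⟩, rfl⟩

lemma Kcard (r m : ℕ) (hr : 2 ≤ r) (b c : Fin (r * m)) (hbc : b.val % r ≠ c.val % r) :
    ((univ : Finset (Fin (r * m) × Fin (r * m))).filter
      (fun q => q.1.val % r ≠ b.val % r ∧ c.val % r ≠ q.2.val % r ∧ q.1 ≠ c ∧ q.1 ≠ q.2 ∧
        b ≠ q.2)).card
      = ((r - 1) * m - 1) * ((r - 1) * m - 1) - (r - 2) * m := by
  have hr0 : 0 < r := by omega
  set A := (univ : Finset (Fin (r * m))).filter
    (fun a => a.val % r ≠ b.val % r ∧ a ≠ c) with hA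
  set D := (univ : Finset (Fin (r * m))).filter
    (fun d => c.val % r ≠ d.val % r ∧ b ≠ d) with hD
  have hsplit : ((univ : Finset (Fin (r * m) × Fin (r * m))).filter
      (fun q => q.1.val % r ≠ b.val % r ∧ c.val % r ≠ q.2.val % r ∧ q.1 ≠ c ∧ q.1 ≠ q.2 ∧
        b ≠ q.2)) = (A ×ˢ D).filter (fun q => q.1 ≠ q.2) := by
    ext ⟨x, y⟩
    simp only [Finset.mem_filter, Finset.mem_univ, true_and, Finset.mem_product, hA, hD]
    tauto
  have hAcard : A.card = (r - 1) * m - 1 := by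
    have : A = ((univ : Finset (Fin (r * m))).filter
        (fun a => a.val % r ≠ b.val % r)).erase c := by
      ext x
      simp only [hA, Finset.mem_filter, Finset.mem_univ, true_and, Finset.mem_erase]
      tauto
    rw [this, Finset.card_erase_of_mem, count_ne_class r m hr0 _ (Nat.mod_lt _ hr0)]
    simp only [Finset.mem_filter, Finset.mem_univ, true_and]
    exact hbc.symm
  have hDcard : D.card = (r - 1) * m - 1 := by
    have : D = ((univ : Finset (Fin (r * m))).filter
        (fun d => d.val % r ≠ c.val % r)).erase b := by
      ext x
      simp only [hD, Finset.mem_filter, Finset.mem_univ, true_and, Finset.mem_erase]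
      constructor
      · rintro ⟨h1, h2⟩; exact ⟨h2.symm, h1.symm⟩
      · rintro ⟨h1, h2⟩; exact ⟨h2.symm, h1.symm⟩
    rw [this, Finset.card_erase_of_mem, count_ne_class r m hr0 _ (Nat.mod_lt _ hr0)]
    simp only [Finset.mem_filter, Finset.mem_univ, true_and]
    exact hbc
  have hXcard : (A ∩ D).card = (r - 2) * m := by
    have : A ∩ D = (univ : Finset (Fin (r * m))).filter
        (fun x => x.val % r ≠ b.val % r ∧ x.val % r ≠ c.val % r) := by
      ext x
      simp only [Finset.mem_inter, hA, hD, Finset.mem_filter, Finset.mem_univ, true_and]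
      constructor
      · rintro ⟨⟨h1, _⟩, ⟨h2, _⟩⟩; exact ⟨h1, h2.symm⟩
      · rintro ⟨h1, h2⟩
        refine ⟨⟨h1, ?_⟩, ⟨h2.symm, ?_⟩⟩
        · rintro rfl; exact h2 rfl
        · rintro rfl; exact h1 rfl
    rw [this]
    exact count_ne_two_classes r m hr0 _ _ (Nat.mod_lt _ hr0) (Nat.mod_lt _ hr0) hbc
  rw [hsplit, card_prod_ne, hAcard, hDcard, hXcard]

variable (r m : ℕ)

/-- The set of ordered path tuples ((b,c),(a,d)) representing paths a-b-c-d. -/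
noncomputable def pathTuples : Finset ((Fin (r * m) × Fin (r * m)) × (Fin (r * m) × Fin (r * m))) :=
  univ.filter (fun t => t.1.1.val % r ≠ t.1.2.val % r ∧
    (t.2.1.val % r ≠ t.1.1.val % r ∧ t.1.2.val % r ≠ t.2.2.val % r ∧
      t.2.1 ≠ t.1.2 ∧ t.2.1 ≠ t.2.2 ∧ t.1.1 ≠ t.2.2))

lemma pathTuples_card (hr : 2 ≤ r) :
    (pathTuples r m).card
      = (r * m * ((r - 1) * m)) * (((r - 1) * m - 1) * ((r - 1) * m - 1) - (r - 2) * m) := by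
  classical
  have hr0 : 0 < r := by omega
  set V := ((r - 1) * m - 1) * ((r - 1) * m - 1) - (r - 2) * m with hV
  have hkey := card_filter_univ_prod (fun (p q : Fin (r * m) × Fin (r * m)) =>
    p.1.val % r ≠ p.2.val % r ∧
    (q.1.val % r ≠ p.1.val % r ∧ p.2.val % r ≠ q.2.val % r ∧
      q.1 ≠ p.2 ∧ q.1 ≠ q.2 ∧ p.1 ≠ q.2))
  beta_reduce at hkey
  rw [pathTuples, hkey]
  have hterm : ∀ p : Fin (r * m) × Fin (r * m),
      ((univ : Finset (Fin (r * m) × Fin (r * m))).filter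
        (fun q => p.1.val % r ≠ p.2.val % r ∧
          (q.1.val % r ≠ p.1.val % r ∧ p.2.val % r ≠ q.2.val % r ∧
            q.1 ≠ p.2 ∧ q.1 ≠ q.2 ∧ p.1 ≠ q.2))).card
      = if p.1.val % r ≠ p.2.val % r then V else 0 := by
    intro p
    by_cases hp : p.1.val % r ≠ p.2.val % r
    · rw [if_pos hp]
      have : ((univ : Finset (Fin (r * m) × Fin (r * m))).filter
          (fun q => p.1.val % r ≠ p.2.val % r ∧
            (q.1.val % r ≠ p.1.val % r ∧ p.2.val % r ≠ q.2.val % r ∧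
              q.1 ≠ p.2 ∧ q.1 ≠ q.2 ∧ p.1 ≠ q.2)))
          = ((univ : Finset (Fin (r * m) × Fin (r * m))).filter
          (fun q => q.1.val % r ≠ p.1.val % r ∧ p.2.val % r ≠ q.2.val % r ∧
              q.1 ≠ p.2 ∧ q.1 ≠ q.2 ∧ p.1 ≠ q.2)) := by
        apply Finset.filter_congr
        intro q _
        tauto
      rw [this, hV]
      exact Kcard r m hr p.1 p.2 hp
    · rw [if_neg hp]
      rw [Finset.filter_false_of_mem, Finset.card_empty]
      intro q _
      tauto
  rw [Finset.sum_congr rfl (fun p _ => hterm p)]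
  rw [← Finset.sum_filter]
  rw [Finset.sum_const, smul_eq_mul]
  congr 1
  have hkey2 := card_filter_univ_prod (fun (a b : Fin (r * m)) => a.val % r ≠ b.val % r)
  beta_reduce at hkey2
  rw [hkey2]
  have : ∀ b : Fin (r * m),
      ((univ : Finset (Fin (r * m))).filter (fun x => b.val % r ≠ x.val % r)).card
        = (r - 1) * m := by
    intro b
    have : ((univ : Finset (Fin (r * m))).filter (fun x => b.val % r ≠ x.val % r))
        = ((univ : Finset (Fin (r * m))).filter (fun x => x.val % r ≠ b.val % r)) := by
      apply Finset.filter_congr; intro x _; simp [ne_comm]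
    rw [this]
    exact count_ne_class r m hr0 _ (Nat.mod_lt _ hr0)
  rw [Finset.sum_congr rfl (fun b _ => this b), Finset.sum_const, smul_eq_mul,
    Finset.card_univ, Fintype.card_fin]

/-- reversal: the ordered tuples double-count paths. -/
lemma pathTuples_two_to_one :
    2 * ((pathTuples r m).filter (fun t => t.2.1 < t.2.2)).card = (pathTuples r m).card := by
  classical
  have key := Finset.card_filter_add_card_filter_not
    (s := pathTuples r m) (p := fun t => t.2.1 < t.2.2)
  have hneg : (pathTuples r m).filter (fun t => ¬t.2.1 < t.2.2)
      = (pathTuples r m).filter (fun t => t.2.2 < t.2.1) := by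
    apply Finset.filter_congr
    intro t ht
    simp only [pathTuples, Finset.mem_filter, Finset.mem_univ, true_and] at ht
    have hne : t.2.1 ≠ t.2.2 := ht.2.2.2.2.1
    constructor
    · intro h; exact lt_of_le_of_ne (not_lt.1 h) hne.symm
    · intro h; exact not_lt.2 h.le
  have hbij : ((pathTuples r m).filter (fun t => t.2.1 < t.2.2)).card
      = ((pathTuples r m).filter (fun t => t.2.2 < t.2.1)).card := by
    apply Finset.card_nbij (fun t => ((t.1.2, t.1.1), (t.2.2, t.2.1)))
    · intro t ht
      simp only [Finset.mem_coe, pathTuples, Finset.mem_filter, Finset.mem_univ, true_and] at ht ⊢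
      obtain ⟨⟨h1, h2, h3, h4, h5, h6⟩, h7⟩ := ht
      exact ⟨⟨fun h => h1 h.symm, fun h => h3 h.symm, fun h => h2 h.symm,
        fun h => h6 h.symm, fun h => h5 h.symm, fun h => h4 h.symm⟩, h7⟩
    · intro t _ t' _ h
      simp only [Prod.mk.injEq] at h
      obtain ⟨⟨e1, e2⟩, e3, e4⟩ := h
      exact Prod.ext (Prod.ext e2 e1) (Prod.ext e4 e3)
    · intro t ht
      simp only [Finset.coe_filter, Set.mem_setOf_eq, pathTuples, Finset.mem_filter,
        Finset.mem_univ, true_and] at ht ⊢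
      obtain ⟨⟨h1, h2, h3, h4, h5, h6⟩, h7⟩ := ht
      refine ⟨((t.1.2, t.1.1), (t.2.2, t.2.1)), ⟨⟨fun h => h1 h.symm, fun h => h3 h.symm,
        fun h => h2 h.symm, fun h => h6 h.symm, fun h => h5 h.symm, fun h => h4 h.symm⟩, h7⟩, ?_⟩
      simp
  rw [hneg] at key
  omega

section
variable {V : Type*}

/-- The path subgraph a-b-c-d. -/
def pSub (G : SimpleGraph V) (a b c d : V) (hab : G.Adj a b) (hbc : G.Adj b c)
    (hcd : G.Adj c d) : G.Subgraph where
  verts := {a, b, c, d}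
  Adj x y := (x = a ∧ y = b ∨ x = b ∧ y = a) ∨ (x = b ∧ y = c ∨ x = c ∧ y = b) ∨
    (x = c ∧ y = d ∨ x = d ∧ y = c)
  adj_sub := by
    rintro x y ((⟨rfl, rfl⟩ | ⟨rfl, rfl⟩) | (⟨rfl, rfl⟩ | ⟨rfl, rfl⟩) | (⟨rfl, rfl⟩ | ⟨rfl, rfl⟩))
    exacts [hab, hab.symm, hbc, hbc.symm, hcd, hcd.symm]
  edge_vert := by
    rintro x y ((⟨rfl, rfl⟩ | ⟨rfl, rfl⟩) | (⟨rfl, rfl⟩ | ⟨rfl, rfl⟩) | (⟨rfl, rfl⟩ | ⟨rfl, rfl⟩)) <;>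
      simp
  symm := by constructor; rintro x y h; tauto

lemma pSub_iso (G : SimpleGraph V) (a b c d : V) (hab : G.Adj a b) (hbc : G.Adj b c)
    (hcd : G.Adj c d) (hac : a ≠ c) (had : a ≠ d) (hbd : b ≠ d) :
    Nonempty (P3 ≃g (pSub G a b c d hab hbc hcd).coe) := by
  have hab' : a ≠ b := hab.ne
  have hbc' : b ≠ c := hbc.ne
  have hcd' : c ≠ d := hcd.ne
  set H := pSub G a b c d hab hbc hcd with hH
  have hmem : ∀ x ∈ ({a, b, c, d} : Set V), x ∈ H.verts := fun x hx => hx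
  let f : Fin 4 → H.verts := ![⟨a, by simp [hH, pSub]⟩, ⟨b, by simp [hH, pSub]⟩,
    ⟨c, by simp [hH, pSub]⟩, ⟨d, by simp [hH, pSub]⟩]
  have hbij : Function.Bijective f := by
    constructor
    · intro i j hij
      fin_cases i <;> fin_cases j <;> simp_all [f]
    · rintro ⟨v, hv⟩
      have : v = a ∨ v = b ∨ v = c ∨ v = d := by
        simpa [hH, pSub, Set.mem_insert_iff] using hv
      rcases this with rfl | rfl | rfl | rfl
      exacts [⟨0, rfl⟩, ⟨1, rfl⟩, ⟨2, rfl⟩, ⟨3, rfl⟩]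
  refine ⟨{ toEquiv := Equiv.ofBijective f hbij, map_rel_iff' := ?_ }⟩
  intro i j
  show H.coe.Adj (f i) (f j) ↔ P3.Adj i j
  fin_cases i <;> fin_cases j <;>
    simp [f, hH, pSub, P3, pathGraph_adj, Subgraph.coe_adj, hab', hbc', hcd', hac, had, hbd,
      hab'.symm, hbc'.symm, hcd'.symm, hac.symm, had.symm, hbd.symm] <;> tauto

lemma pSub_adj (G : SimpleGraph V) (a b c d : V) (hab : G.Adj a b) (hbc : G.Adj b c)
    (hcd : G.Adj c d) (x y : V) :
    (pSub G a b c d hab hbc hcd).Adj x y ↔ pAdj a b c d x y := Iff.rfl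

/-- A subgraph with path structure a-b-c-d equals pSub. -/
lemma eq_pSub (G : SimpleGraph V) (H : G.Subgraph) (a b c d : V)
    (hab : H.Adj a b) (hbc : H.Adj b c) (hcd : H.Adj c d)
    (hac : ¬H.Adj a c) (had : ¬H.Adj a d) (hbd : ¬H.Adj b d)
    (hv : H.verts = {a, b, c, d}) :
    H = pSub G a b c d (H.adj_sub hab) (H.adj_sub hbc) (H.adj_sub hcd) := by
  have loop : ∀ x, ¬H.Adj x x := fun x h => (H.adj_sub h).ne rfl
  refine SimpleGraph.Subgraph.ext hv ?_
  ext x y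
  constructor
  · intro h
    have hx : x = a ∨ x = b ∨ x = c ∨ x = d := by
      have := H.edge_vert h; rw [hv] at this; simpa using this
    have hy : y = a ∨ y = b ∨ y = c ∨ y = d := by
      have := H.edge_vert h.symm; rw [hv] at this; simpa using this
    show (x = a ∧ y = b ∨ x = b ∧ y = a) ∨ (x = b ∧ y = c ∨ x = c ∧ y = b) ∨
      (x = c ∧ y = d ∨ x = d ∧ y = c)
    rcases hx with rfl | rfl | rfl | rfl <;> rcases hy with rfl | rfl | rfl | rfl <;>
      first
        | (exact absurd h (loop _))
        | (exact absurd h hac) | (exact absurd h had) | (exact absurd h hbd)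
        | (exact absurd h.symm hac) | (exact absurd h.symm had) | (exact absurd h.symm hbd)
        | tauto
  · rintro ((⟨rfl, rfl⟩ | ⟨rfl, rfl⟩) | (⟨rfl, rfl⟩ | ⟨rfl, rfl⟩) | (⟨rfl, rfl⟩ | ⟨rfl, rfl⟩))
    exacts [hab, hab.symm, hbc, hbc.symm, hcd, hcd.symm]

/-- Extract path data from an isomorphism. -/
lemma iso_data (G : SimpleGraph V) (H : G.Subgraph) (f : P3 ≃g H.coe) :
    ∃ a b c d : V, H.Adj a b ∧ H.Adj b c ∧ H.Adj c d ∧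
      ¬H.Adj a c ∧ ¬H.Adj a d ∧ ¬H.Adj b d ∧ H.verts = {a, b, c, d} ∧
      a ≠ c ∧ a ≠ d ∧ b ≠ d := by
  have hinj : ∀ i j : Fin 4, i ≠ j → ((f i : V) ≠ (f j : V)) := by
    intro i j hij h
    exact hij (f.toEquiv.injective (Subtype.ext h))
  refine ⟨f 0, f 1, f 2, f 3, ?_, ?_, ?_, ?_, ?_, ?_, ?_,
    hinj 0 2 (by decide), hinj 0 3 (by decide), hinj 1 3 (by decide)⟩
  · exact (f.map_rel_iff.2 (by simp [P3, pathGraph_adj] <;> decide : P3.Adj 0 1) : H.coe.Adj _ _)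
  · exact (f.map_rel_iff.2 (by simp [P3, pathGraph_adj] <;> decide : P3.Adj 1 2) : H.coe.Adj _ _)
  · exact (f.map_rel_iff.2 (by simp [P3, pathGraph_adj] <;> decide : P3.Adj 2 3) : H.coe.Adj _ _)
  · intro h
    have : P3.Adj 0 2 := f.map_rel_iff.1 (h : H.coe.Adj (f 0) (f 2))
    rw [P3, pathGraph_adj] at this; revert this; decide
  · intro h
    have : P3.Adj 0 3 := f.map_rel_iff.1 (h : H.coe.Adj (f 0) (f 3))
    rw [P3, pathGraph_adj] at this; revert this; decide
  · intro h
    have : P3.Adj 1 3 := f.map_rel_iff.1 (h : H.coe.Adj (f 1) (f 3))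
    rw [P3, pathGraph_adj] at this; revert this; decide
  · ext v
    constructor
    · intro hv
      have : (⟨v, hv⟩ : H.verts) = f (f.symm ⟨v, hv⟩) := (f.apply_symm_apply _).symm
      have hv' : v = ↑(f (f.symm ⟨v, hv⟩)) := congrArg Subtype.val this
      generalize f.symm (⟨v, hv⟩ : H.verts) = i at hv'
      fin_cases i <;> (rw [hv']; simp)
    · intro hv
      rcases hv with rfl | rfl | rfl | rfl
      exacts [(f 0).2, (f 1).2, (f 2).2, (f 3).2]

end

lemma subgraphCount_eq (r m : ℕ) (hr : 2 ≤ r) :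
    subgraphCount P3 (turanGraph (r * m) r)
      = ((pathTuples r m).filter (fun t => t.2.1 < t.2.2)).card := by
  classical
  set G := turanGraph (r * m) r with hG
  set T' := (pathTuples r m).filter (fun t => t.2.1 < t.2.2) with hT
  have hmem : ∀ t, t ∈ T' ↔ ((t.1.1.val % r ≠ t.1.2.val % r ∧
      (t.2.1.val % r ≠ t.1.1.val % r ∧ t.1.2.val % r ≠ t.2.2.val % r ∧
        t.2.1 ≠ t.1.2 ∧ t.2.1 ≠ t.2.2 ∧ t.1.1 ≠ t.2.2)) ∧ t.2.1 < t.2.2) := by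
    intro t
    simp only [hT, pathTuples, Finset.mem_filter, Finset.mem_univ, true_and]
  rw [subgraphCount, ← Nat.card_eq_finsetCard T']
  apply Nat.card_congr
  refine (Equiv.ofBijective (fun x : {x // x ∈ T'} =>
    (⟨pSub G x.1.2.1 x.1.1.1 x.1.1.2 x.1.2.2
        (((hmem x.1).1 x.2).1.2.1) (((hmem x.1).1 x.2).1.1) (((hmem x.1).1 x.2).1.2.2.1),
      pSub_iso G _ _ _ _ _ _ _ (((hmem x.1).1 x.2).1.2.2.2.1)
        (ne_of_lt ((hmem x.1).1 x.2).2) (((hmem x.1).1 x.2).1.2.2.2.2.2)⟩ :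
      {H : G.Subgraph // Nonempty (P3 ≃g H.coe)})) ⟨?_, ?_⟩).symm
  · -- injective
    intro x y h
    have hS := congrArg Subtype.val h
    simp only at hS
    have hA : ∀ u v, pAdj x.1.2.1 x.1.1.1 x.1.1.2 x.1.2.2 u v ↔
        pAdj y.1.2.1 y.1.1.1 y.1.1.2 y.1.2.2 u v := fun u v =>
      iff_of_eq (congrFun (congrFun (congrArg SimpleGraph.Subgraph.Adj hS) u) v)
    have hx := (hmem x.1).1 x.2
    have hy := (hmem y.1).1 y.2
    obtain ⟨e1, e2, e3, e4⟩ := pAdj_inj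
      (fun e => hx.1.2.1 (by rw [e])) (fun e => hx.1.1 (by rw [e]))
      (fun e => hx.1.2.2.1 (by rw [e])) hx.1.2.2.2.1 hx.2 hx.1.2.2.2.2.2
      (fun e => hy.1.2.1 (by rw [e])) (fun e => hy.1.1 (by rw [e]))
      (fun e => hy.1.2.2.1 (by rw [e])) hy.1.2.2.2.1 hy.2 hy.1.2.2.2.2.2 hA
    exact Subtype.ext (Prod.ext (Prod.ext e2 e3) (Prod.ext e1 e4))
  · -- surjective
    rintro ⟨H, hne⟩
    obtain ⟨f⟩ := hne
    obtain ⟨a, b, c, d, hab, hbc, hcd, hac, had, hbd, hv, nac, nad, nbd⟩ := iso_data G H f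
    have Gab : G.Adj a b := H.adj_sub hab
    have Gbc : G.Adj b c := H.adj_sub hbc
    have Gcd : G.Adj c d := H.adj_sub hcd
    rcases lt_or_gt_of_ne nad with hlt | hgt
    · refine ⟨⟨((b, c), (a, d)), (hmem _).2 ⟨⟨Gbc, Gab, Gcd, nac, nad, nbd⟩, hlt⟩⟩, ?_⟩
      exact Subtype.ext (eq_pSub G H a b c d hab hbc hcd hac had hbd hv).symm
    · refine ⟨⟨((c, b), (d, a)), (hmem _).2 ⟨⟨Ne.symm Gbc, Ne.symm Gcd, Ne.symm Gab,
        Ne.symm nbd, Ne.symm nad, Ne.symm nac⟩, hgt⟩⟩, ?_⟩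
      have hv' : H.verts = {d, c, b, a} := by
        rw [hv]; ext x; simp only [Set.mem_insert_iff, Set.mem_singleton_iff]; tauto
      exact Subtype.ext (eq_pSub G H d c b a hcd.symm hbc.symm hab.symm
        (fun h => hbd h.symm) (fun h => had h.symm) (fun h => hac h.symm) hv').symm

theorem P3_count_turanGraph_divisible (r n m : ℕ) (hr : 2 ≤ r) (hn : 0 < n)
    (hm : n = r * m) :
    (subgraphCount P3 (turanGraph n r) : ℤ) =
      (r.choose 2 : ℤ) * m ^ 2 *
        (((m : ℤ) - 1) ^ 2 + ((n : ℤ) - 2 * m) * ((n : ℤ) - 3)) := by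
  subst hm
  have hm1 : 1 ≤ m := by
    rcases Nat.eq_zero_or_pos m with h | h
    · subst h; simp at hn
    · exact h
  obtain ⟨j, rfl⟩ : ∃ j, r = j + 2 := ⟨r - 2, by omega⟩
  obtain ⟨k, rfl⟩ : ∃ k, m = k + 1 := ⟨m - 1, by omega⟩
  have h1 := subgraphCount_eq (j + 2) (k + 1) (by omega)
  have h2 := pathTuples_two_to_one (j + 2) (k + 1)
  have h3 := pathTuples_card (j + 2) (k + 1) (by omega)
  have e1 : (j + 2) - 1 = j + 1 := by omega
  have e2 : (j + 2) - 2 = j := by omega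
  have e3 : (j + 1) * (k + 1) - 1 = j * k + j + k := by
    have : (j + 1) * (k + 1) = j * k + j + k + 1 := by ring
    omega
  rw [e1, e2, e3] at h3
  set N := subgraphCount P3 (turanGraph ((j + 2) * (k + 1)) (j + 2)) with hN
  have key : 2 * N = ((j + 2) * (k + 1) * ((j + 1) * (k + 1))) *
      ((j * k + j + k) * (j * k + j + k) - j * (k + 1)) := by
    rw [h1, h2, h3]
  have hle : j * (k + 1) ≤ (j * k + j + k) * (j * k + j + k) := by nlinarith
  have keyZ : 2 * (N : ℤ) = (((j : ℤ) + 2) * ((k : ℤ) + 1) * (((j : ℤ) + 1) * ((k : ℤ) + 1))) *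
      (((j : ℤ) * k + j + k) * ((j : ℤ) * k + j + k) - (j : ℤ) * ((k : ℤ) + 1)) := by
    calc 2 * (N : ℤ) = ((2 * N : ℕ) : ℤ) := by push_cast; ring
    _ = (((j + 2) * (k + 1) * ((j + 1) * (k + 1)) : ℕ) : ℤ) *
        (((j * k + j + k) * (j * k + j + k) - j * (k + 1) : ℕ) : ℤ) := by
      rw [key]; push_cast; ring
    _ = _ := by rw [Nat.cast_sub hle]; push_cast; ring
  have hch : 2 * ((j + 2).choose 2) = (j + 2) * (j + 1) := by
    rw [Nat.choose_two_right, e1]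
    have hd : 2 ∣ (j + 2) * (j + 1) := by
      have := (Nat.even_mul_succ_self (j + 1)).two_dvd
      have he : (j + 1) * (j + 1 + 1) = (j + 2) * (j + 1) := by ring
      rwa [he] at this
    exact Nat.mul_div_cancel' hd
  have hC : 2 * ((j + 2).choose 2 : ℤ) = ((j : ℤ) + 2) * ((j : ℤ) + 1) := by
    exact_mod_cast congrArg (fun x : ℕ => (x : ℤ)) hch
  push_cast
  apply mul_left_cancel₀ (two_ne_zero (α := ℤ))
  rw [keyZ]
  linear_combination (-(((k : ℤ) + 1) ^ 2 * (((k : ℤ) + 1 - 1) ^ 2 +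
    (((j : ℤ) + 2) * ((k : ℤ) + 1) - 2 * ((k : ℤ) + 1)) *
      (((j : ℤ) + 2) * ((k : ℤ) + 1) - 3)))) * hC
end
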